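/- For every word w in the free group F_k and all sufficiently large n, the expected number of fixed points of the permutation w(σ_1,...,σ_k), where σ_1,...,σ_k are independent uniform elements of S_n, equals n times the sum over realizable quotient graphs Γ of the trail of w of the term [(n−1)(n−2)···(n−v_Γ+1)] / ∏_{j=1}^k [n(n−1)···(n−e_Γ^j+1)], where v_Γ is the number of vertices of Γ and e_Γ^j the number of j-labeled edges. -/

import Mathlib

/-- A letter `g_i^{±1}` of the alphabet `Σ_k`. -/
abbrev Letter (k : ℕ) := Fin k × Bool

/-- The word map: substitute `σ_i` for `g_i` in `w` and take the product. -/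
def wordPerm {k n : ℕ} (w : List (Letter k)) (σ : Fin k → Equiv.Perm (Fin n)) :
    Equiv.Perm (Fin n) :=
  (w.map fun x => if x.2 then σ x.1 else (σ x.1)⁻¹).prod

/-- The number of fixed points of a permutation of `Fin n`. -/
def fixCount {n : ℕ} (π : Equiv.Perm (Fin n)) : ℕ :=
  (Finset.univ.filter fun x => π x = x).card

/-- A realizable quotient graph of the trail of `w`, encoded as an equivalence relation
(boolean matrix) on the vertices `s_0, …, s_m` of the trail: `s_0 ≡ s_m`, and two
equally-labeled edges never share an origin or a terminus in the quotient. -/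
def RealizableQuot {k : ℕ} (w : List (Letter k))
    (r : Fin (w.length + 1) → Fin (w.length + 1) → Bool) : Prop :=
  (∀ i, r i i = true) ∧ (∀ i j, r i j = true → r j i = true) ∧
  (∀ i j l, r i j = true → r j l = true → r i l = true) ∧
  (r 0 (Fin.last w.length) = true) ∧
  (∀ h h' : Fin w.length, (w.get h).1 = (w.get h').1 →
    (((w.get h).2 = (w.get h').2 →
        r h.castSucc h'.castSucc = r (h.succ) (h'.succ)) ∧
     ((w.get h).2 ≠ (w.get h').2 →
        r h.castSucc (h'.succ) = r (h.succ) h'.castSucc)))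

/-- The equivalence class (block) of a vertex. -/
def blockOf {k : ℕ} (w : List (Letter k))
    (r : Fin (w.length + 1) → Fin (w.length + 1) → Bool) (i : Fin (w.length + 1)) :
    Finset (Fin (w.length + 1)) :=
  Finset.univ.filter fun j => r i j = true

/-- `v_Γ` : the number of vertices (blocks) of the quotient graph. -/
def vcount {k : ℕ} (w : List (Letter k))
    (r : Fin (w.length + 1) → Fin (w.length + 1) → Bool) : ℕ :=
  (Finset.univ.image (blockOf w r)).card

/-- `e_Γ^j` : the number of `j`-labeled (directed) edges of the quotient graph. -/
def ecount {k : ℕ} (w : List (Letter k))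
    (r : Fin (w.length + 1) → Fin (w.length + 1) → Bool) (j : Fin k) : ℕ :=
  ((Finset.univ.filter fun h : Fin w.length => (w.get h).1 = j).image fun h =>
    if (w.get h).2 then (blockOf w r h.castSucc, blockOf w r h.succ)
    else (blockOf w r h.succ, blockOf w r h.castSucc)).card


open Finset

namespace Stmt8Aux

lemma card_image_iff {α β γ : Type*} [DecidableEq β] [DecidableEq γ] (s : Finset α)
    (F : α → β) (G : α → γ) (h : ∀ a ∈ s, ∀ b ∈ s, (F a = F b ↔ G a = G b)) :
    (s.image F).card = (s.image G).card := by
  classical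
  refine Finset.card_bij (fun b hb => G (Finset.mem_image.1 hb).choose) ?_ ?_ ?_
  · intro b hb
    have hs := (Finset.mem_image.1 hb).choose_spec
    exact Finset.mem_image_of_mem G hs.1
  · intro b₁ h₁ b₂ h₂ he
    have hs₁ := (Finset.mem_image.1 h₁).choose_spec
    have hs₂ := (Finset.mem_image.1 h₂).choose_spec
    rw [← hs₁.2, ← hs₂.2]
    exact (h _ hs₁.1 _ hs₂.1).2 he
  · intro c hc
    obtain ⟨a, ha, rfl⟩ := Finset.mem_image.1 hc
    refine ⟨F a, Finset.mem_image_of_mem F ha, ?_⟩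
    have hs := (Finset.mem_image.1 (Finset.mem_image_of_mem F ha)).choose_spec
    exact (h _ hs.1 _ ha).1 hs.2

lemma subtypeCongr_apply_pos {α : Type*} {p q : α → Prop} [DecidablePred p] [DecidablePred q]
    (e : {x // p x} ≃ {x // q x}) (f : {x // ¬p x} ≃ {x // ¬q x}) {x : α} (hx : p x) :
    Equiv.subtypeCongr e f x = (e ⟨x, hx⟩ : {x // q x}).1 := by
  simp [Equiv.subtypeCongr, hx]

lemma subtypeCongr_apply_neg {α : Type*} {p q : α → Prop} [DecidablePred p] [DecidablePred q]
    (e : {x // p x} ≃ {x // q x}) (f : {x // ¬p x} ≃ {x // ¬q x}) {x : α} (hx : ¬ p x) :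
    Equiv.subtypeCongr e f x = (f ⟨x, hx⟩ : {x // ¬q x}).1 := by
  simp [Equiv.subtypeCongr, hx]

lemma card_perm_ext {α : Type*} [Fintype α] [DecidableEq α] (E : Finset (α × α))
    (hE : ∀ p ∈ E, ∀ q ∈ E, (p.1 = q.1 ↔ p.2 = q.2)) :
    Fintype.card {π : Equiv.Perm α // ∀ p ∈ E, π p.1 = p.2}
      = (Fintype.card α - (E.image Prod.fst).card).factorial := by
  classical
  set A := E.image Prod.fst with hA
  set B := E.image Prod.snd with hB
  have hex : ∀ x : {x // x ∈ A}, ∃ p, p ∈ E ∧ p.1 = x.1 := by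
    rintro ⟨x, hx⟩
    simpa [hA, Finset.mem_image] using hx
  choose pr hprE hpr1 using hex
  have FinjB : ∀ x, (pr x).2 ∈ B := fun x => Finset.mem_image_of_mem Prod.snd (hprE x)
  set F : {x // x ∈ A} → {x // x ∈ B} := fun x => ⟨(pr x).2, FinjB x⟩ with hF
  have Finj : Function.Injective F := by
    rintro x x' hxx
    have h2 : (pr x).2 = (pr x').2 := congrArg Subtype.val hxx
    have h1 : (pr x).1 = (pr x').1 := (hE _ (hprE x) _ (hprE x')).2 h2
    exact Subtype.ext (by rw [← hpr1 x, ← hpr1 x', h1])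
  have Fsurj : Function.Surjective F := by
    rintro ⟨y, hy⟩
    obtain ⟨q, hq, rfl⟩ := Finset.mem_image.1 hy
    refine ⟨⟨q.1, Finset.mem_image_of_mem Prod.fst hq⟩, Subtype.ext ?_⟩
    exact (hE _ (hprE _) _ hq).1 (hpr1 _)
  let e0 : {x // x ∈ A} ≃ {x // x ∈ B} := Equiv.ofBijective F ⟨Finj, Fsurj⟩
  have he0 : ∀ p (hp : p ∈ E), (e0 ⟨p.1, Finset.mem_image_of_mem Prod.fst hp⟩ : α) = p.2 := by
    intro p hp
    show ((pr ⟨p.1, _⟩).2 : α) = p.2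
    exact (hE _ (hprE _) _ hp).1 (hpr1 _)
  have hmem : ∀ (π : Equiv.Perm α), (∀ p ∈ E, π p.1 = p.2) → ∀ x : α, (x ∈ A ↔ π x ∈ B) := by
    intro π hπ x
    constructor
    · intro hx
      obtain ⟨p, hp, rfl⟩ := Finset.mem_image.1 hx
      rw [hπ p hp]; exact Finset.mem_image_of_mem Prod.snd hp
    · intro hx
      obtain ⟨q, hq, hq2⟩ := Finset.mem_image.1 hx
      have : π q.1 = π x := by rw [hπ q hq, hq2]
      rw [← π.injective this]
      exact Finset.mem_image_of_mem Prod.fst hq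
  let Φ : {π : Equiv.Perm α // ∀ p ∈ E, π p.1 = p.2} ≃ ({x // ¬ x ∈ A} ≃ {x // ¬ x ∈ B}) :=
  { toFun := fun π => Equiv.subtypeEquiv π.1 (fun x => not_congr (hmem π.1 π.2 x))
    invFun := fun e => ⟨Equiv.subtypeCongr e0 e, by
      intro p hp
      rw [subtypeCongr_apply_pos e0 e (Finset.mem_image_of_mem Prod.fst hp)]
      exact he0 p hp⟩
    left_inv := by
      rintro ⟨π, hπ⟩
      apply Subtype.ext
      apply Equiv.ext
      intro x
      by_cases hx : x ∈ A
      · rw [subtypeCongr_apply_pos e0 _ hx]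
        obtain ⟨p, hp, rfl⟩ := Finset.mem_image.1 hx
        rw [he0 p hp, hπ p hp]
      · rw [subtypeCongr_apply_neg e0 _ hx]
        rfl
    right_inv := by
      intro e
      apply Equiv.ext
      rintro ⟨x, hx⟩
      apply Subtype.ext
      show Equiv.subtypeCongr e0 e x = _
      rw [subtypeCongr_apply_neg e0 e hx] }
  rw [Fintype.card_congr Φ]
  have hAB : Fintype.card {x // ¬ x ∈ A} = Fintype.card {x // ¬ x ∈ B} := by
    rw [Fintype.card_subtype_compl, Fintype.card_subtype_compl, Fintype.card_congr e0]
  rw [Fintype.card_equiv (Fintype.equivOfCardEq hAB), Fintype.card_subtype_compl,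
    Fintype.card_coe]

end Stmt8Aux
namespace Stmt8Aux

section
variable {ι β : Type*} [Fintype ι] [DecidableEq ι] [Fintype β] [DecidableEq β]
variable (r : ι → ι → Bool)

lemma blockOf_eq_iff (hr : Equivalence (fun i j => r i j = true)) (a b : ι) :
    (Finset.univ.filter fun j => r a j = true) = (Finset.univ.filter fun j => r b j = true)
      ↔ r a b = true := by
  constructor
  · intro h
    have hb : b ∈ Finset.univ.filter fun j => r b j = true := by
      simp [hr.refl b]
    rw [← h] at hb
    simpa using hb
  · intro h
    ext x
    simp only [Finset.mem_filter, Finset.mem_univ, true_and]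
    exact ⟨fun hx => hr.trans (hr.symm h) hx, fun hx => hr.trans h hx⟩

lemma card_fun_rel (hr : Equivalence (fun i j => r i j = true)) :
    Fintype.card {f : ι → β // ∀ i j, (f i = f j ↔ r i j = true)}
      = (Fintype.card β).descFactorial
          ((Finset.univ.image fun i => Finset.univ.filter fun j => r i j = true).card) := by
  classical
  letI sd : Setoid ι := ⟨fun i j => r i j = true, hr⟩
  letI : DecidableRel sd.r := fun i j => inferInstanceAs (Decidable (r i j = true))
  letI : DecidableRel (fun x1 x2 : ι => x1 ≈ x2) := fun i j => inferInstanceAs (Decidable (r i j = true))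
  let E1 : {f : ι → β // ∀ i j, (f i = f j ↔ r i j = true)} ≃ (Quotient sd ↪ β) :=
  { toFun := fun f => ⟨Quotient.lift f.1 (fun a b hab => (f.2 a b).2 hab),
      fun x y => Quotient.inductionOn₂ x y (fun a b hfg => Quotient.sound ((f.2 a b).1 hfg))⟩
    invFun := fun g => ⟨fun i => g ⟦i⟧, fun i j => by
      constructor
      · intro hg
        exact Quotient.exact (g.injective hg)
      · intro hij
        exact congrArg g (Quotient.sound hij)⟩
    left_inv := fun f => Subtype.ext (funext fun i => rfl)
    right_inv := fun g => Function.Embedding.ext fun x => Quotient.inductionOn x fun a => rfl }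
  rw [Fintype.card_congr E1, Fintype.card_embedding_eq]
  congr 1
  -- card (Quotient sd) = card of image of blocks
  have hinj : Function.Injective
      (Quotient.lift (fun i => Finset.univ.filter fun j => r i j = true)
        (fun a b hab => (blockOf_eq_iff r hr a b).2 hab) : Quotient sd → Finset ι) := by
    intro x y
    refine Quotient.inductionOn₂ x y (fun a b h => Quotient.sound ?_)
    exact (blockOf_eq_iff r hr a b).1 h
  have himg : (Finset.univ.image fun i => Finset.univ.filter fun j => r i j = true)
      = (Finset.univ : Finset (Quotient sd)).image
          (Quotient.lift (fun i => Finset.univ.filter fun j => r i j = true)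
            (fun a b hab => (blockOf_eq_iff r hr a b).2 hab)) := by
    rw [← Finset.image_univ_of_surjective (Quotient.mk''_surjective (s₁ := sd)),
      Finset.image_image]
    rfl
  rw [himg, Finset.card_image_of_injective _ hinj, Finset.card_univ]

end
end Stmt8Aux


namespace Stmt8Aux

variable {k n : ℕ}

/-- source vertex of edge `h` (the vertex to which `σ_j` is applied). -/
def esrc (w : List (Letter k)) (h : Fin w.length) : Fin (w.length + 1) :=
  if (w.get h).2 then h.succ else h.castSucc

/-- target vertex of edge `h`. -/
def edst (w : List (Letter k)) (h : Fin w.length) : Fin (w.length + 1) :=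
  if (w.get h).2 then h.castSucc else h.succ

def Compat (w : List (Letter k)) (σ : Fin k → Equiv.Perm (Fin n))
    (f : Fin (w.length + 1) → Fin n) : Prop :=
  ∀ h : Fin w.length, σ (w.get h).1 (f (esrc w h)) = f (edst w h)

instance decCompat {w : List (Letter k)} {σ : Fin k → Equiv.Perm (Fin n)}
    {f : Fin (w.length + 1) → Fin n} : Decidable (Compat w σ f) :=
  inferInstanceAs (Decidable (∀ h : Fin w.length, σ (w.get h).1 (f (esrc w h)) = f (edst w h)))

lemma wordPerm_cons (a : Letter k) (l : List (Letter k)) (σ : Fin k → Equiv.Perm (Fin n)) :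
    wordPerm (a :: l) σ = (if a.2 then σ a.1 else (σ a.1)⁻¹) * wordPerm l σ := by
  simp [wordPerm]

def trailF (w : List (Letter k)) (σ : Fin k → Equiv.Perm (Fin n)) (x : Fin n)
    (i : Fin (w.length + 1)) : Fin n :=
  wordPerm (w.drop i.val) σ x

lemma trailF_last (w : List (Letter k)) (σ : Fin k → Equiv.Perm (Fin n)) (x : Fin n) :
    trailF w σ x (Fin.last w.length) = x := by
  simp [trailF, wordPerm]

lemma trailF_zero (w : List (Letter k)) (σ : Fin k → Equiv.Perm (Fin n)) (x : Fin n) :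
    trailF w σ x 0 = wordPerm w σ x := by
  simp [trailF]

lemma trailF_step (w : List (Letter k)) (σ : Fin k → Equiv.Perm (Fin n)) (x : Fin n)
    (h : Fin w.length) :
    trailF w σ x h.castSucc
      = (if (w.get h).2 then σ (w.get h).1 else (σ (w.get h).1)⁻¹) (trailF w σ x h.succ) := by
  have hd : w.drop h.castSucc.val = w.get h :: w.drop (h.val + 1) := by
    rw [Fin.coe_castSucc, List.get_eq_getElem]
    exact List.drop_eq_getElem_cons h.isLt
  show wordPerm (w.drop h.castSucc.val) σ x = _
  rw [hd, wordPerm_cons]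
  rfl

lemma trailF_compat (w : List (Letter k)) (σ : Fin k → Equiv.Perm (Fin n)) (x : Fin n) :
    Compat w σ (trailF w σ x) := by
  intro h
  by_cases hb : (w.get h).2
  · simp only [esrc, edst, hb, if_true]
    rw [trailF_step w σ x h, if_pos hb]
  · simp only [esrc, edst, hb, Bool.false_eq_true, if_false]
    rw [trailF_step w σ x h, if_neg hb]
    exact Equiv.apply_symm_apply _ _

lemma compat_ext {w : List (Letter k)} {σ : Fin k → Equiv.Perm (Fin n)}
    {f g : Fin (w.length + 1) → Fin n} (hf : Compat w σ f) (hg : Compat w σ g)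
    (hlast : f (Fin.last w.length) = g (Fin.last w.length)) : f = g := by
  have key : ∀ d (hd : d ≤ w.length),
      f ⟨w.length - d, by omega⟩ = g ⟨w.length - d, by omega⟩ := by
    intro d
    induction d with
    | zero =>
      intro _
      have : (⟨w.length - 0, by omega⟩ : Fin (w.length + 1)) = Fin.last w.length := by
        apply Fin.ext; simp
      rw [this]; exact hlast
    | succ d ih =>
      intro hd
      have hi : w.length - (d + 1) < w.length := by omega
      set h : Fin w.length := ⟨w.length - (d + 1), hi⟩ with hh
      have hsucc : h.succ = (⟨w.length - d, by omega⟩ : Fin (w.length + 1)) := by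
        apply Fin.ext; simp [hh]; omega
      have ihs : f h.succ = g h.succ := by rw [hsucc]; exact ih (by omega)
      have hcast : h.castSucc = (⟨w.length - (d + 1), by omega⟩ : Fin (w.length + 1)) := rfl
      rw [← hcast]
      by_cases hb : (w.get h).2
      · have hf' := hf h; have hg' := hg h
        simp only [esrc, edst, hb, if_true] at hf' hg'
        rw [← hf', ← hg', ihs]
      · have hf' := hf h; have hg' := hg h
        simp only [esrc, edst, hb, Bool.false_eq_true, if_false] at hf' hg'
        rw [ihs] at hf'
        rw [← hg'] at hf'
        exact (σ (w.get h).1).injective hf'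
  funext i
  have := key (w.length - i.val) (by omega)
  have hi : (⟨w.length - (w.length - i.val), by omega⟩ : Fin (w.length + 1)) = i := by
    apply Fin.ext
    have := i.isLt
    simp; omega
  rwa [hi] at this

lemma fixCount_eq (w : List (Letter k)) (σ : Fin k → Equiv.Perm (Fin n)) :
    fixCount (wordPerm w σ)
      = Fintype.card {f : Fin (w.length + 1) → Fin n //
          Compat w σ f ∧ f 0 = f (Fin.last w.length)} := by
  classical
  rw [fixCount, ← Fintype.card_subtype]
  refine Fintype.card_congr ?_
  refine
  { toFun := fun x => ⟨trailF w σ x.1, trailF_compat w σ x.1, ?_⟩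
    invFun := fun f => ⟨f.1 (Fin.last w.length), ?_⟩
    left_inv := fun x => Subtype.ext (trailF_last w σ x.1)
    right_inv := fun f => Subtype.ext (compat_ext (trailF_compat w σ _) f.2.1
      (trailF_last w σ _)) }
  · rw [trailF_zero, trailF_last, x.2]
  · have hfg : trailF w σ (f.1 (Fin.last w.length)) = f.1 :=
      compat_ext (trailF_compat w σ _) f.2.1 (trailF_last w σ _)
    have h0 := congrFun hfg 0
    rw [trailF_zero] at h0
    rw [h0, ← f.2.2]

end Stmt8Aux


namespace Stmt8Aux

variable {k n : ℕ}

def relOf {M : ℕ} (f : Fin M → Fin n) : Fin M → Fin M → Bool :=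
  fun i j => decide (f i = f j)

lemma relOf_eq_iff {M : ℕ} (f : Fin M → Fin n) (r : Fin M → Fin M → Bool) :
    relOf f = r ↔ ∀ i j, (f i = f j ↔ r i j = true) := by
  constructor
  · rintro rfl i j; simp [relOf]
  · intro h
    funext i j
    rcases hr : r i j with _ | _
    · simpa [relOf, hr] using fun hc => by simpa [hr] using (h i j).1 hc
    · simpa [relOf, hr] using (h i j).2 hr

lemma equivalence_of_realizable {w : List (Letter k)} {r} (hr : RealizableQuot w r) :
    Equivalence (fun i j => r i j = true) :=
  ⟨hr.1, fun {i j} => hr.2.1 i j, fun {i j l} => hr.2.2.1 i j l⟩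

lemma blockOf_eq_iff' {w : List (Letter k)} {r} (hr : RealizableQuot w r)
    (a b : Fin (w.length + 1)) : blockOf w r a = blockOf w r b ↔ r a b = true :=
  blockOf_eq_iff r (equivalence_of_realizable hr) a b

lemma rel_src_dst {w : List (Letter k)} {r} (hr : RealizableQuot w r)
    {h h' : Fin w.length} (hl : (w.get h).1 = (w.get h').1) :
    r (esrc w h) (esrc w h') = r (edst w h) (edst w h') := by
  obtain ⟨hrefl, hsymm, htrans, h0, hedge⟩ := hr
  by_cases b : (w.get h).2 <;> by_cases b' : (w.get h').2
  · simp only [esrc, edst, b, b', if_true]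
    exact ((hedge h h' hl).1 (by rw [b, b'])).symm
  · simp only [esrc, edst, b, b', Bool.false_eq_true, if_true, if_false]
    exact ((hedge h h' hl).2 (fun hx => b' (hx.symm.trans b))).symm
  · simp only [esrc, edst, b, b', Bool.false_eq_true, if_true, if_false]
    exact (hedge h h' hl).2 (fun hx => b (hx.trans b'))
  · have b0 : (w.get h).2 = false := by simpa using b
    have b0' : (w.get h').2 = false := by simpa using b'
    simp only [esrc, edst, b0, b0', Bool.false_eq_true, if_false]
    exact (hedge h h' hl).1 (by rw [b0, b0'])

lemma relOf_realizable {w : List (Letter k)} {σ : Fin k → Equiv.Perm (Fin n)}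
    {f : Fin (w.length + 1) → Fin n} (hc : Compat w σ f)
    (hcl : f 0 = f (Fin.last w.length)) : RealizableQuot w (relOf f) := by
  refine ⟨fun i => by simp [relOf], fun i j hij => ?_, fun i j l hij hjl => ?_,
    by simp [relOf, hcl], ?_⟩
  · simp only [relOf, decide_eq_true_eq] at *; exact hij.symm
  · simp only [relOf, decide_eq_true_eq] at *; exact hij.trans hjl
  · intro h h' hl
    have key : (f (esrc w h) = f (esrc w h')) ↔ (f (edst w h) = f (edst w h')) := by
      conv_rhs => rw [← hc h, ← hc h', hl]
      exact (Equiv.apply_eq_iff_eq _).symm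
    constructor
    · intro hb
      by_cases b : (w.get h).2
      · have b' : (w.get h').2 = true := by rw [← hb, b]
        simp only [esrc, edst, b, b', if_true] at key
        simp only [relOf, decide_eq_decide]
        exact key.symm
      · have b0 : (w.get h).2 = false := by simpa using b
        have b' : (w.get h').2 = false := by rw [← hb, b0]
        simp only [esrc, edst, b0, b', Bool.false_eq_true, if_false] at key
        simp only [relOf, decide_eq_decide]
        exact key
    · intro hb
      by_cases b : (w.get h).2
      · have b' : (w.get h').2 = false := by
          cases hx : (w.get h').2
          · rfl
          · exact absurd (b.trans hx.symm) hb
        simp only [esrc, edst, b, b', Bool.false_eq_true, if_true, if_false] at key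
        simp only [relOf, decide_eq_decide]
        exact key.symm
      · have b0 : (w.get h).2 = false := by simpa using b
        have b' : (w.get h').2 = true := by
          cases hx : (w.get h').2
          · exact absurd (b0.trans hx.symm) hb
          · rfl
        simp only [esrc, edst, b0, b', Bool.false_eq_true, if_true, if_false] at key
        simp only [relOf, decide_eq_decide]
        exact key

end Stmt8Aux

namespace Stmt8Aux

variable {k n : ℕ}

lemma ecount_eq (w : List (Letter k)) (r) (j : Fin k) :
    ecount w r j = ((Finset.univ.filter fun h : Fin w.length => (w.get h).1 = j).image
      fun h => (blockOf w r (edst w h), blockOf w r (esrc w h))).card := by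
  rw [ecount]
  congr 1
  apply Finset.image_congr
  intro h _
  by_cases b : (w.get h).2
  · simp [esrc, edst, ← List.get_eq_getElem, b]
  · simp [esrc, edst, ← List.get_eq_getElem, b]

lemma card_compat_fixed {w : List (Letter k)} {r} (hr : RealizableQuot w r)
    {f : Fin (w.length + 1) → Fin n} (hf : ∀ i j, (f i = f j ↔ r i j = true)) :
    Fintype.card {σ : Fin k → Equiv.Perm (Fin n) // Compat w σ f}
      = ∏ j : Fin k, (n - ecount w r j).factorial := by
  have e1 : {σ : Fin k → Equiv.Perm (Fin n) // Compat w σ f}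
      ≃ ∀ j : Fin k, {π : Equiv.Perm (Fin n) //
          ∀ h ∈ Finset.univ.filter (fun h : Fin w.length => (w.get h).1 = j),
            π (f (esrc w h)) = f (edst w h)} := by
    refine (Equiv.subtypeEquivRight ?_).trans Equiv.subtypePiEquivPi
    intro σ
    constructor
    · intro hc j h hh
      rw [Finset.mem_filter] at hh
      rw [← hh.2]
      exact hc h
    · intro hc h
      exact hc (w.get h).1 h (by simp)
  refine Eq.trans (Fintype.card_congr e1) ?_
  rw [Fintype.card_pi]
  refine Finset.prod_congr rfl fun j _ => ?_
  set s := Finset.univ.filter (fun h : Fin w.length => (w.get h).1 = j) with hs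
  set E := s.image (fun h => (f (esrc w h), f (edst w h))) with hE
  have hlbl : ∀ h ∈ s, (w.get h).1 = j := fun h hh => (Finset.mem_filter.1 hh).2
  have hEcond : ∀ p ∈ E, ∀ q ∈ E, (p.1 = q.1 ↔ p.2 = q.2) := by
    intro p hp q hq
    obtain ⟨h, hh, rfl⟩ := Finset.mem_image.1 hp
    obtain ⟨h', hh', rfl⟩ := Finset.mem_image.1 hq
    have hl : (w.get h).1 = (w.get h').1 := (hlbl h hh).trans (hlbl h' hh').symm
    simp only
    rw [hf, hf, rel_src_dst hr hl]
  have hcongr : ∀ π : Equiv.Perm (Fin n),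
      ((∀ h ∈ s, π (f (esrc w h)) = f (edst w h)) ↔ (∀ p ∈ E, π p.1 = p.2)) := by
    intro π
    constructor
    · intro hπ p hp
      obtain ⟨h, hh, rfl⟩ := Finset.mem_image.1 hp
      exact hπ h hh
    · intro hπ h hh
      exact hπ _ (Finset.mem_image_of_mem _ hh)
  refine Eq.trans (Fintype.card_congr (Equiv.subtypeEquivRight hcongr)) ?_
  have h3 := card_perm_ext E hEcond
  rw [Fintype.card_fin] at h3
  have hcount : ecount w r j = (E.image Prod.fst).card := by
    rw [hE, Finset.image_image, ecount_eq w r j, ← hs]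
    refine card_image_iff s _ _ ?_
    intro a ha b hb
    have hl : (w.get a).1 = (w.get b).1 := (hlbl a ha).trans (hlbl b hb).symm
    constructor
    · intro hab
      have h1 : blockOf w r (esrc w a) = blockOf w r (esrc w b) := congrArg Prod.snd hab
      exact (hf _ _).2 ((blockOf_eq_iff' hr _ _).1 h1)
    · intro hab
      have h1 : r (esrc w a) (esrc w b) = true := (hf _ _).1 hab
      have h2 : r (edst w a) (edst w b) = true := by rw [rel_src_dst hr hl] at h1; exact h1
      rw [Prod.ext_iff]
      exact ⟨(blockOf_eq_iff' hr _ _).2 h2, (blockOf_eq_iff' hr _ _).2 h1⟩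
  rw [hcount]
  convert h3 using 2

lemma card_rel_eq {w : List (Letter k)} {r} (hr : RealizableQuot w r) :
    Fintype.card {f : Fin (w.length + 1) → Fin n // relOf f = r}
      = n.descFactorial (vcount w r) := by
  have h2 := card_fun_rel (β := Fin n) r (equivalence_of_realizable hr)
  rw [Fintype.card_fin] at h2
  refine Eq.trans (Fintype.card_congr (Equiv.subtypeEquivRight (fun f => relOf_eq_iff f r))) ?_
  have hv : vcount w r
      = (Finset.univ.image fun i => Finset.univ.filter fun j => r i j = true).card := rfl
  rw [hv]
  convert h2 using 2

lemma card_fiber {w : List (Letter k)} {r} (hr : RealizableQuot w r) :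
    Fintype.card {p : (Fin k → Equiv.Perm (Fin n)) × (Fin (w.length + 1) → Fin n) //
        Compat w p.1 p.2 ∧ relOf p.2 = r}
      = n.descFactorial (vcount w r) * ∏ j : Fin k, (n - ecount w r j).factorial := by
  let e : {p : (Fin k → Equiv.Perm (Fin n)) × (Fin (w.length + 1) → Fin n) //
        Compat w p.1 p.2 ∧ relOf p.2 = r}
      ≃ Σ f : {f : Fin (w.length + 1) → Fin n // relOf f = r},
          {σ : Fin k → Equiv.Perm (Fin n) // Compat w σ f.1} :=
  { toFun := fun p => ⟨⟨p.1.2, p.2.2⟩, ⟨p.1.1, p.2.1⟩⟩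
    invFun := fun q => ⟨(q.2.1, q.1.1), q.2.2, q.1.2⟩
    left_inv := fun _ => rfl
    right_inv := fun _ => rfl }
  refine Eq.trans (Fintype.card_congr e) ?_
  rw [Fintype.card_sigma]
  have hconst : ∀ f : {f : Fin (w.length + 1) → Fin n // relOf f = r},
      Fintype.card {σ : Fin k → Equiv.Perm (Fin n) // Compat w σ f.1}
        = ∏ j : Fin k, (n - ecount w r j).factorial := by
    intro f
    exact card_compat_fixed hr ((relOf_eq_iff f.1 r).1 f.2)
  rw [Finset.sum_congr rfl (fun f _ => hconst f), Finset.sum_const, Finset.card_univ,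
    card_rel_eq hr, smul_eq_mul]

end Stmt8Aux

namespace Stmt8Aux

variable {k n : ℕ}

open scoped Classical in
lemma total_count (w : List (Letter k)) :
    (∑ σ : Fin k → Equiv.Perm (Fin n), fixCount (wordPerm w σ))
      = ∑ r ∈ Finset.univ.filter (RealizableQuot w),
          n.descFactorial (vcount w r) * ∏ j : Fin k, (n - ecount w r j).factorial := by
  classical
  have e2 : (Σ σ : Fin k → Equiv.Perm (Fin n),
        {f : Fin (w.length + 1) → Fin n // Compat w σ f ∧ f 0 = f (Fin.last w.length)})
      ≃ {p : (Fin k → Equiv.Perm (Fin n)) × (Fin (w.length + 1) → Fin n) //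
          Compat w p.1 p.2 ∧ p.2 0 = p.2 (Fin.last w.length)} :=
  { toFun := fun q => ⟨(q.1, q.2.1), q.2.2⟩
    invFun := fun p => ⟨p.1.1, p.1.2, p.2⟩
    left_inv := fun _ => rfl
    right_inv := fun _ => rfl }
  have h1 : (∑ σ : Fin k → Equiv.Perm (Fin n), fixCount (wordPerm w σ))
      = Fintype.card {p : (Fin k → Equiv.Perm (Fin n)) × (Fin (w.length + 1) → Fin n) //
          Compat w p.1 p.2 ∧ p.2 0 = p.2 (Fin.last w.length)} := by
    rw [Finset.sum_congr rfl (fun σ _ => fixCount_eq w σ), ← Fintype.card_sigma,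
      Fintype.card_congr e2]
  rw [h1, Fintype.card_subtype]
  have hmaps : ∀ p ∈ Finset.univ.filter
      (fun p : (Fin k → Equiv.Perm (Fin n)) × (Fin (w.length + 1) → Fin n) =>
        Compat w p.1 p.2 ∧ p.2 0 = p.2 (Fin.last w.length)),
      relOf p.2 ∈ Finset.univ.filter (RealizableQuot w) := by
    intro p hp
    rw [Finset.mem_filter] at hp ⊢
    exact ⟨Finset.mem_univ _, relOf_realizable hp.2.1 hp.2.2⟩
  rw [Finset.card_eq_sum_card_fiberwise hmaps]
  refine Finset.sum_congr rfl fun r hr => ?_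
  have hrr : RealizableQuot w r := (Finset.mem_filter.1 hr).2
  rw [Finset.filter_filter]
  have heq : Finset.univ.filter
      (fun p : (Fin k → Equiv.Perm (Fin n)) × (Fin (w.length + 1) → Fin n) =>
        (Compat w p.1 p.2 ∧ p.2 0 = p.2 (Fin.last w.length)) ∧ relOf p.2 = r)
      = Finset.univ.filter (fun p => Compat w p.1 p.2 ∧ relOf p.2 = r) := by
    apply Finset.filter_congr
    intro p _
    constructor
    · rintro ⟨⟨hc, _⟩, hrel⟩; exact ⟨hc, hrel⟩
    · rintro ⟨hc, hrel⟩
      refine ⟨⟨hc, ?_⟩, hrel⟩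
      have h0 := hrr.2.2.2.1
      rw [← hrel] at h0
      simpa [relOf] using h0
  rw [heq, ← Fintype.card_subtype]
  exact card_fiber hrr

lemma vcount_pos (w : List (Letter k)) (r) : 0 < vcount w r :=
  Finset.card_pos.2 ⟨blockOf w r 0, Finset.mem_image_of_mem _ (Finset.mem_univ 0)⟩

lemma vcount_le {w : List (Letter k)} {r} (hr : RealizableQuot w r)
    (hn : w.length ≤ n) (hn0 : 0 < n) : vcount w r ≤ n := by
  rcases Nat.eq_zero_or_pos w.length with h0 | hpos
  · have h1 : vcount w r ≤ Fintype.card (Fin (w.length + 1)) :=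
      le_trans Finset.card_image_le (by rw [Finset.card_univ])
    rw [Fintype.card_fin, h0] at h1
    omega
  · have hb : blockOf w r (Fin.last w.length) = blockOf w r 0 :=
      (blockOf_eq_iff' hr _ _).2 (hr.2.1 _ _ hr.2.2.2.1)
    have h0last : (0 : Fin (w.length + 1)) ≠ Fin.last w.length := by
      intro hc
      have := congrArg Fin.val hc
      simp at this
      omega
    have hsub : Finset.univ.image (blockOf w r)
        ⊆ (Finset.univ.erase (Fin.last w.length)).image (blockOf w r) := by
      intro x hx
      obtain ⟨i, _, rfl⟩ := Finset.mem_image.1 hx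
      by_cases hi : i = Fin.last w.length
      · subst hi
        rw [hb]
        exact Finset.mem_image_of_mem _ (Finset.mem_erase.2 ⟨h0last, Finset.mem_univ _⟩)
      · exact Finset.mem_image_of_mem _ (Finset.mem_erase.2 ⟨hi, Finset.mem_univ _⟩)
    calc vcount w r ≤ ((Finset.univ.erase (Fin.last w.length)).image (blockOf w r)).card :=
          Finset.card_le_card hsub
      _ ≤ (Finset.univ.erase (Fin.last w.length)).card := Finset.card_image_le
      _ = w.length := by
          rw [Finset.card_erase_of_mem (Finset.mem_univ _), Finset.card_univ, Fintype.card_fin]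
          omega
      _ ≤ n := hn

lemma ecount_le (w : List (Letter k)) (r) (j : Fin k) : ecount w r j ≤ w.length :=
  le_trans Finset.card_image_le (le_trans (Finset.card_filter_le _ _)
    (by rw [Finset.card_univ, Fintype.card_fin]))

lemma term_eq {v : ℕ} {e : Fin k → ℕ} (hn0 : 0 < n) (hv1 : 1 ≤ v) (hvn : v ≤ n)
    (he : ∀ j, e j ≤ n) :
    ((n.descFactorial v : ℚ) * ∏ j : Fin k, ((n - e j).factorial : ℚ)) / ((n.factorial : ℚ)) ^ k
      = n * ((∏ t ∈ Finset.range (v - 1), ((n : ℚ) - 1 - t)) /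
          ∏ j : Fin k, ∏ t ∈ Finset.range (e j), ((n : ℚ) - t)) := by
  have hcast : ∀ m : ℕ, m ≤ n → (n.descFactorial m : ℚ) = ∏ t ∈ Finset.range m, ((n : ℚ) - t) := by
    intro m hm
    rw [Nat.descFactorial_eq_prod_range, Nat.cast_prod]
    refine Finset.prod_congr rfl fun t ht => ?_
    have h1 : t < m := Finset.mem_range.1 ht
    rw [Nat.cast_sub (by omega)]
  have hfact : ∀ j : Fin k, (n.factorial : ℚ)
      = ((n - e j).factorial : ℚ) * ∏ t ∈ Finset.range (e j), ((n : ℚ) - t) := by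
    intro j
    rw [← hcast _ (he j), ← Nat.cast_mul, Nat.factorial_mul_descFactorial (he j)]
  have hne : ∀ j : Fin k, (∏ t ∈ Finset.range (e j), ((n : ℚ) - t)) ≠ 0 := by
    intro j
    refine Finset.prod_ne_zero_iff.2 fun t ht => ?_
    have h1 : t < e j := Finset.mem_range.1 ht
    have h2 : (t : ℚ) < (n : ℚ) := by exact_mod_cast lt_of_lt_of_le h1 (he j)
    exact ne_of_gt (by linarith)
  have hfac0 : ((n.factorial : ℚ)) ^ k ≠ 0 := pow_ne_zero _ (by
    exact_mod_cast n.factorial_ne_zero)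
  have hD : (∏ j : Fin k, ∏ t ∈ Finset.range (e j), ((n : ℚ) - t)) ≠ 0 :=
    Finset.prod_ne_zero_iff.2 fun j _ => hne j
  have hsplit : (n.descFactorial v : ℚ)
      = n * ∏ t ∈ Finset.range (v - 1), ((n : ℚ) - 1 - t) := by
    rw [hcast v hvn]
    have hv : v = (v - 1) + 1 := by omega
    calc ∏ t ∈ Finset.range v, ((n : ℚ) - t)
        = ∏ t ∈ Finset.range ((v - 1) + 1), ((n : ℚ) - t) := by rw [← hv]
      _ = (∏ t ∈ Finset.range (v - 1), ((n : ℚ) - (t + 1 : ℕ))) * ((n : ℚ) - (0 : ℕ)) :=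
          Finset.prod_range_succ' _ _
      _ = n * ∏ t ∈ Finset.range (v - 1), ((n : ℚ) - 1 - t) := by
          have hc : ∀ t ∈ Finset.range (v - 1), ((n : ℚ) - ((t + 1 : ℕ) : ℚ)) = ((n : ℚ) - 1 - t) :=
            fun t _ => by push_cast; ring
          rw [Finset.prod_congr rfl hc]
          push_cast
          ring
  rw [hsplit, mul_div_assoc', div_eq_div_iff hfac0 hD]
  have hpow : ((n.factorial : ℚ)) ^ k = ∏ _j : Fin k, (n.factorial : ℚ) := by
    rw [Finset.prod_const, Finset.card_univ, Fintype.card_fin]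
  rw [hpow, Finset.prod_congr rfl (fun j _ => hfact j), Finset.prod_mul_distrib]
  ring

end Stmt8Aux


open scoped Classical in
/-- For every word `w` and all sufficiently large `n`, the expected number of fixed
points of `w(σ_1, …, σ_k)`, for independent uniform `σ_i ∈ S_n`, equals `n` times the
sum over realizable quotient graphs `Γ` of the trail of `w` of
`[(n−1)⋯(n−v_Γ+1)] / ∏_j [n(n−1)⋯(n−e_Γ^j+1)]`. -/
theorem stmt8 {k : ℕ} (w : List (Letter k)) (n : ℕ) (hn : w.length ≤ n) (hn0 : 0 < n) :
    (∑ σ : Fin k → Equiv.Perm (Fin n), (fixCount (wordPerm w σ) : ℚ)) /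
        ((n.factorial : ℚ) ^ k)
      = n * ∑ r ∈ Finset.univ.filter (RealizableQuot w),
          (∏ t ∈ Finset.range (vcount w r - 1), ((n : ℚ) - 1 - t)) /
            ∏ j : Fin k, ∏ t ∈ Finset.range (ecount w r j), ((n : ℚ) - t) := by
    classical
  have hN := Stmt8Aux.total_count (n := n) w
  have hcast : (∑ σ : Fin k → Equiv.Perm (Fin n), (fixCount (wordPerm w σ) : ℚ))
      = ((∑ σ : Fin k → Equiv.Perm (Fin n), fixCount (wordPerm w σ) : ℕ) : ℚ) := by
    push_cast
    rfl
  rw [hcast, hN, Nat.cast_sum, Finset.sum_div, Finset.mul_sum]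
  refine Finset.sum_congr rfl fun r hr => ?_
  have hrr : RealizableQuot w r := (Finset.mem_filter.1 hr).2
  rw [Nat.cast_mul, Nat.cast_prod]
  exact Stmt8Aux.term_eq hn0 (Stmt8Aux.vcount_pos w r) (Stmt8Aux.vcount_le hrr hn hn0)
    (fun j => le_trans (Stmt8Aux.ecount_le w r j) hn)
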